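/- arXiv:1903.00129 — 3 statements merged into one kernel-verified Lean document; each statement's English description precedes it below -/
import Mathlib

section
/- Let Θ be a finite set, π₀ a probability distribution on Θ with full support, and γ ∈ (0,1]. A probability distribution π on Θ satisfies π₀(E)·π(E') ≥ γ·π₀(E')·π(E) for all subsets E, E' ⊆ Θ if and only if there exists c > 0 such that γ·c ≤ π(θ)/π₀(θ) ≤ c for all θ ∈ Θ. -/
open Finset

theorem stmt_0 (Θ : Type*) [Fintype Θ] [Nonempty Θ]
    (π₀ π : Θ → ℝ) (γ : ℝ) (hγ : 0 < γ) (hγ1 : γ ≤ 1)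
    (hπ₀pos : ∀ θ, 0 < π₀ θ) (hπ₀sum : ∑ θ, π₀ θ = 1)
    (hπnn : ∀ θ, 0 ≤ π θ) (hπsum : ∑ θ, π θ = 1) :
    (∀ E E' : Finset Θ,
        (∑ θ ∈ E, π₀ θ) * (∑ θ ∈ E', π θ) ≥ γ * (∑ θ ∈ E', π₀ θ) * (∑ θ ∈ E, π θ))
    ↔ ∃ c > 0, ∀ θ, γ * c ≤ π θ / π₀ θ ∧ π θ / π₀ θ ≤ c := by
  constructor
  · intro h
    obtain ⟨θs, -, hθs⟩ := Finset.exists_max_image (univ : Finset Θ)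
      (fun θ => π θ / π₀ θ) univ_nonempty
    refine ⟨π θs / π₀ θs, ?_, ?_⟩
    · -- there is θ₀ with π θ₀ > 0
      have : ∃ θ, 0 < π θ := by
        by_contra hc
        push_neg at hc
        have : ∑ θ, π θ = 0 := le_antisymm (Finset.sum_nonpos fun θ _ => hc θ)
          (Finset.sum_nonneg fun θ _ => hπnn θ)
        rw [hπsum] at this; norm_num at this
      obtain ⟨θ₀, hθ₀⟩ := this
      have h1 : 0 < π θ₀ / π₀ θ₀ := div_pos hθ₀ (hπ₀pos θ₀)
      exact lt_of_lt_of_le h1 (hθs θ₀ (mem_univ _))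
    · intro θ
      refine ⟨?_, hθs θ (mem_univ _)⟩
      have := h {θs} {θ}
      simp only [Finset.sum_singleton] at this
      rw [← mul_div_assoc, div_le_div_iff₀ (hπ₀pos θs) (hπ₀pos θ)]
      nlinarith [this]
  · rintro ⟨c, hc, hbd⟩ E E'
    have hA : 0 ≤ ∑ θ ∈ E, π₀ θ := Finset.sum_nonneg fun θ _ => (hπ₀pos θ).le
    have hB : 0 ≤ ∑ θ ∈ E', π₀ θ := Finset.sum_nonneg fun θ _ => (hπ₀pos θ).le
    have hP : ∑ θ ∈ E, π θ ≤ c * ∑ θ ∈ E, π₀ θ := by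
      rw [Finset.mul_sum]
      refine Finset.sum_le_sum fun θ _ => ?_
      have := (hbd θ).2
      rw [div_le_iff₀ (hπ₀pos θ)] at this
      linarith [this]
    have hQ : γ * c * ∑ θ ∈ E', π₀ θ ≤ ∑ θ ∈ E', π θ := by
      rw [Finset.mul_sum]
      refine Finset.sum_le_sum fun θ _ => ?_
      have := (hbd θ).1
      rw [le_div_iff₀ (hπ₀pos θ)] at this
      linarith [this]
    nlinarith [mul_le_mul_of_nonneg_left hP (mul_nonneg hγ.le hB),
      mul_le_mul_of_nonneg_left hQ hA]
end

section
/- For γ ∈ (0,1] and θ₁ ∈ (0,1), define f(θ₁) = (γ·θ₁² + 1 − θ₁²) / (2·(γ·θ₁ + 1 − θ₁)). Then f is maximized over (0,1) at θ₁ = 1/(1+√γ), and the maximum value equals 1/(1+√γ). -/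
theorem stmt_11 (γ : ℝ) (hγ : γ ∈ Set.Ioc (0:ℝ) 1) :
    (∀ θ₁ ∈ Set.Ioo (0:ℝ) 1,
      (γ * θ₁ ^ 2 + 1 - θ₁ ^ 2) / (2 * (γ * θ₁ + 1 - θ₁)) ≤ 1 / (1 + Real.sqrt γ)) ∧
    (1 / (1 + Real.sqrt γ) ∈ Set.Ioo (0:ℝ) 1 →
      (γ * (1 / (1 + Real.sqrt γ)) ^ 2 + 1 - (1 / (1 + Real.sqrt γ)) ^ 2) /
          (2 * (γ * (1 / (1 + Real.sqrt γ)) + 1 - 1 / (1 + Real.sqrt γ)))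
        = 1 / (1 + Real.sqrt γ)) := by
  obtain ⟨hγ0, hγ1⟩ := hγ
  set s := Real.sqrt γ with hsdef
  have hs2 : s ^ 2 = γ := Real.sq_sqrt hγ0.le
  have hs0 : 0 < s := Real.sqrt_pos.mpr hγ0
  have hs1 : s ≤ 1 := by
    nlinarith [hs0]
  constructor
  · intro θ ⟨hθ0, hθ1⟩
    have hden : 0 < 2 * (γ * θ + 1 - θ) := by nlinarith
    have hden2 : 0 < 1 + s := by linarith
    rw [div_le_div_iff₀ hden hden2]
    nlinarith [mul_nonneg (by linarith : (0:ℝ) ≤ 1 - s) (sq_nonneg (1 - (1 + s) * θ))]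
  · intro _
    have hden2 : (1 + s) ≠ 0 := by positivity
    have hden : 0 < 2 * (γ * (1 / (1 + s)) + 1 - 1 / (1 + s)) := by
      have h1 : (0:ℝ) < 1 / (1 + s) := by positivity
      have h2 : 1 / (1 + s) ≤ 1 := by
        rw [div_le_one (by positivity)]; linarith
      nlinarith
    rw [div_eq_div_iff hden.ne' (by positivity : (1 + s) ≠ 0)]
    have h1s : (1 + s) ≠ 0 := by positivity
    field_simp
    nlinarith [hs2]
end

section
/- In the crowdfunding model, a receiver with wealth w > 0, CARA-type payoff −θ_π·e^{−(w+ρ·a)} − (1−θ_π)·e^{−(w−a)} replaced by the logarithmic specification θ_π·log(w+ρ·a) + (1−θ_π)·log(w−a), and expected success probability θ_π ∈ (1/(1+ρ), 1), has optimal pledge BR = (w/ρ)·(θ_π·(1+ρ) − 1) > 0; moreover BR = 0 whenever θ_π ≤ 1/(1+ρ). -/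
private lemma log_diff_le (x c : ℝ) (hx : 0 < x) (hc : 0 < c) :
    Real.log x - Real.log c ≤ x / c - 1 := by
  rw [← Real.log_div (ne_of_gt hx) (ne_of_gt hc)]
  exact Real.log_le_sub_one_of_pos (div_pos hx hc)

theorem stmt_16 (w ρ θπ : ℝ) (hw : 0 < w) (hρ : 0 < ρ) (hθ1 : θπ < 1) (hθ0 : 0 ≤ θπ) :
    (θπ ∈ Set.Ioo (1 / (1 + ρ)) 1 →
      (0 < (w / ρ) * (θπ * (1 + ρ) - 1) ∧
        (w / ρ) * (θπ * (1 + ρ) - 1) ∈ Set.Ico (0:ℝ) w ∧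
        ∀ a ∈ Set.Ico (0:ℝ) w,
          θπ * Real.log (w + ρ * a) + (1 - θπ) * Real.log (w - a) ≤
            θπ * Real.log (w + ρ * ((w / ρ) * (θπ * (1 + ρ) - 1))) +
              (1 - θπ) * Real.log (w - (w / ρ) * (θπ * (1 + ρ) - 1)))) ∧
    (θπ ≤ 1 / (1 + ρ) →
      ∀ a ∈ Set.Ico (0:ℝ) w,
        θπ * Real.log (w + ρ * a) + (1 - θπ) * Real.log (w - a) ≤
          θπ * Real.log (w + ρ * 0) + (1 - θπ) * Real.log (w - 0)) := by
  have h1ρ : (0:ℝ) < 1 + ρ := by linarith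
  constructor
  · rintro ⟨hθlo, -⟩
    have hθρ : 1 < θπ * (1 + ρ) := by
      rw [div_lt_iff₀ h1ρ] at hθlo; linarith
    have hθpos : 0 < θπ := by
      by_contra h; push_neg at h; nlinarith
    have hApos : 0 < (w / ρ) * (θπ * (1 + ρ) - 1) :=
      mul_pos (div_pos hw hρ) (by linarith)
    have hsubst : w + ρ * ((w / ρ) * (θπ * (1 + ρ) - 1)) = w * θπ * (1 + ρ) := by
      field_simp; ring
    have hsubst2 : w - (w / ρ) * (θπ * (1 + ρ) - 1) = w * (1 + ρ) * (1 - θπ) / ρ := by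
      field_simp; ring
    have hBlt : (w / ρ) * (θπ * (1 + ρ) - 1) < w := by
      rw [div_mul_eq_mul_div, div_lt_iff₀ hρ]
      nlinarith [mul_lt_mul_of_pos_right (mul_lt_mul_of_pos_left hθ1 hw) h1ρ]
    refine ⟨hApos, ⟨le_of_lt hApos, hBlt⟩, ?_⟩
    rintro a ⟨ha0, haw⟩
    set ast := (w / ρ) * (θπ * (1 + ρ) - 1) with hast
    have hA : 0 < w + ρ * a := by nlinarith
    have hB : 0 < w - a := by linarith
    have hAst : 0 < w + ρ * ast := by nlinarith
    have hBst : 0 < w - ast := by linarith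
    have hl1 := log_diff_le (w + ρ * a) (w + ρ * ast) hA hAst
    have hl2 := log_diff_le (w - a) (w - ast) hB hBst
    have hm : (0:ℝ) < 1 - θπ := by linarith
    have key : θπ * ((w + ρ * a) / (w + ρ * ast) - 1)
        + (1 - θπ) * ((w - a) / (w - ast) - 1) = 0 := by
      rw [hsubst, hsubst2, div_div_eq_mul_div]
      field_simp [hw.ne', hρ.ne', h1ρ.ne', hθpos.ne', hm.ne']
      ring
    nlinarith [mul_le_mul_of_nonneg_left hl1 hθ0,
      mul_le_mul_of_nonneg_left hl2 (by linarith : (0:ℝ) ≤ 1 - θπ)]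
  · intro hθle a ⟨ha0, haw⟩
    have hθρ : θπ * (1 + ρ) ≤ 1 := by
      rw [le_div_iff₀ h1ρ] at hθle; linarith
    have hA : 0 < w + ρ * a := by nlinarith
    have hB : 0 < w - a := by linarith
    have hl1 := log_diff_le (w + ρ * a) w hA hw
    have hl2 := log_diff_le (w - a) w hB hw
    simp only [mul_zero, add_zero, sub_zero]
    have key : θπ * ((w + ρ * a) / w - 1) + (1 - θπ) * ((w - a) / w - 1)
        = (a / w) * (θπ * (1 + ρ) - 1) := by
      field_simp; ring
    have hle : (a / w) * (θπ * (1 + ρ) - 1) ≤ 0 :=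
      mul_nonpos_of_nonneg_of_nonpos (by positivity) (by linarith)
    nlinarith [mul_le_mul_of_nonneg_left hl1 hθ0,
      mul_le_mul_of_nonneg_left hl2 (by linarith : (0:ℝ) ≤ 1 - θπ)]
end
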